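/- In a median graph G with a fixed basepoint v₀, let u, v, w be vertices such that u ∈ I(v₀,v) and v ∈ I(v₀,w), and such that v is the basis and w the anti-basis of an induced hypercube whose set of Θ-classes is a POF L outgoing from v. Then u ∈ I(v₀,w), v ∈ I(u,w), and the signature satisfies σ_{u,w} = σ_{u,v} ∪ L with σ_{u,v} ∩ L = ∅. -/

import Mathlib

namespace MedianPaper

variable {V : Type*}

/-- The metric interval `I(u,v)`: vertices on shortest `(u,v)`-paths. -/
def interval (G : SimpleGraph V) (u v : V) : Set V :=
  {w | G.dist u w + G.dist w v = G.dist u v}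

/-- A median graph: a connected graph in which every triple of vertices
has a unique median. -/
def MedianGraph (G : SimpleGraph V) : Prop :=
  G.Connected ∧ ∀ x y z : V, ∃! m : V,
    m ∈ interval G x y ∧ m ∈ interval G y z ∧ m ∈ interval G z x

/-- `u v x y` span a 4-cycle `u-v-y-x-u`, with opposite edge pairs
`(uv, xy)` and `(ux, vy)`. -/
def IsSquare (G : SimpleGraph V) (u v x y : V) : Prop :=
  G.Adj u v ∧ G.Adj x y ∧ G.Adj u x ∧ G.Adj v y ∧ u ≠ y ∧ v ≠ x

/-- Two edges are in relation Θ₀ if they are opposite edges of a common 4-cycle. -/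
def Theta0 (G : SimpleGraph V) (e f : Sym2 V) : Prop :=
  ∃ u v x y : V, IsSquare G u v x y ∧ e = s(u, v) ∧ f = s(x, y)

/-- Θ : the reflexive-transitive closure of Θ₀ on the edges of `G`. -/
def Theta (G : SimpleGraph V) (e f : Sym2 V) : Prop :=
  e ∈ G.edgeSet ∧ f ∈ G.edgeSet ∧ Relation.ReflTransGen (Theta0 G) e f

/-- The Θ-classes of `G`: equivalence classes of edges under Θ. -/
def ThetaClass (G : SimpleGraph V) (C : Set (Sym2 V)) : Prop :=
  ∃ e ∈ G.edgeSet, C = {f | Theta G e f}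

/-- The edge set `C` separates `u` from `v` : they lie in different
components of `G` minus `C`. -/
def Separates (G : SimpleGraph V) (C : Set (Sym2 V)) (u v : V) : Prop :=
  ¬ (G.deleteEdges C).Reachable u v

/-- The signature `σ_{u,v}`: Θ-classes separating `u` from `v`. -/
def signature (G : SimpleGraph V) (u v : V) : Set (Set (Sym2 V)) :=
  {C | ThetaClass G C ∧ Separates G C u v}

/-- `H`, `H'` are the two connected components (halfspaces) of `G` deprived
of the edges in `C`. -/
def IsHalfspacePair (G : SimpleGraph V) (C : Set (Sym2 V)) (H H' : Set V) : Prop :=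
  H.Nonempty ∧ H'.Nonempty ∧ Disjoint H H' ∧ H ∪ H' = Set.univ ∧
  (∀ x ∈ H, ∀ y ∈ H, (G.deleteEdges C).Reachable x y) ∧
  (∀ x ∈ H', ∀ y ∈ H', (G.deleteEdges C).Reachable x y) ∧
  (∀ x ∈ H, ∀ y ∈ H', ¬ (G.deleteEdges C).Reachable x y)

/-- The boundary of a halfspace `H` of the Θ-class `C` : vertices of `H`
incident to an edge of `C`. -/
def boundarySet (G : SimpleGraph V) (C : Set (Sym2 V)) (H : Set V) : Set V :=
  {x | x ∈ H ∧ ∃ y, G.Adj x y ∧ s(x, y) ∈ C}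

/-- Orthogonality of Θ-classes: there is a common square using both. -/
def Orthogonal (G : SimpleGraph V) (C₁ C₂ : Set (Sym2 V)) : Prop :=
  ∃ u v x y : V, IsSquare G u v x y ∧
    s(u, v) ∈ C₁ ∧ s(x, y) ∈ C₁ ∧ s(u, x) ∈ C₂ ∧ s(v, y) ∈ C₂

/-- A pairwise orthogonal family (POF) of Θ-classes. -/
def IsPOF (G : SimpleGraph V) (X : Set (Set (Sym2 V))) : Prop :=
  (∀ C ∈ X, ThetaClass G C) ∧
  ∀ C ∈ X, ∀ C' ∈ X, C ≠ C' → Orthogonal G C C'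

/-- The `k`-dimensional hypercube graph, on subsets of `{1,…,k}`;
two subsets are adjacent iff their symmetric difference has one element. -/
def cubeGraph (k : ℕ) : SimpleGraph (Finset (Fin k)) where
  Adj A B := (symmDiff A B).card = 1
  symm := by
    constructor
    intro A B h
    rwa [symmDiff_comm] at h
  loopless := by
    constructor
    intro A h
    simp [symmDiff_self] at h

/-- `S` induces a hypercube of dimension `k` in `G`. -/
def IsCubeDim (G : SimpleGraph V) (S : Set V) (k : ℕ) : Prop :=
  Nonempty ((G.induce S) ≃g cubeGraph k)

/-- `S` induces a hypercube in `G`. -/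
def IsInducedCube (G : SimpleGraph V) (S : Set V) : Prop :=
  ∃ k, IsCubeDim G S k

/-- The dimension of `G` is `d`: the largest dimension of an induced hypercube. -/
def GraphDim (G : SimpleGraph V) (d : ℕ) : Prop :=
  (∃ S : Set V, IsCubeDim G S d) ∧ ∀ (S : Set V) (k : ℕ), IsCubeDim G S k → k ≤ d

/-- The Θ-classes of the edges of the induced subgraph on `S`. -/
def cubeClasses (G : SimpleGraph V) (S : Set V) : Set (Set (Sym2 V)) :=
  {C | ThetaClass G C ∧ ∃ x ∈ S, ∃ y ∈ S, G.Adj x y ∧ s(x, y) ∈ C}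

/-- With the `v₀`-orientation, `b ∈ S` is the basis of `S`: all edges of `S`
incident to `b` are outgoing from `b`. -/
def IsBasis (G : SimpleGraph V) (v₀ : V) (S : Set V) (b : V) : Prop :=
  b ∈ S ∧ ∀ w ∈ S, G.Adj b w → G.dist v₀ b < G.dist v₀ w

/-- With the `v₀`-orientation, `b ∈ S` is the anti-basis of `S`: all edges of `S`
incident to `b` are ingoing to `b`. -/
def IsAntiBasis (G : SimpleGraph V) (v₀ : V) (S : Set V) (b : V) : Prop :=
  b ∈ S ∧ ∀ w ∈ S, G.Adj b w → G.dist v₀ w < G.dist v₀ b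

/-- `ℰ⁻(v)` : the Θ-classes containing at least one edge ingoing to `v`. -/
def inClasses (G : SimpleGraph V) (v₀ v : V) : Set (Set (Sym2 V)) :=
  {C | ThetaClass G C ∧ ∃ u, G.Adj u v ∧ G.dist v₀ u < G.dist v₀ v ∧ s(u, v) ∈ C}

/-- The ladder set `L_{u,v}`: classes of the signature `σ_{u,v}` having an
edge incident to `u`. -/
def ladder (G : SimpleGraph V) (u v : V) : Set (Set (Sym2 V)) :=
  {C | C ∈ signature G u v ∧ ∃ w, G.Adj u w ∧ s(u, w) ∈ C}

/-- A POF each of whose classes has an edge outgoing from `u`. -/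
def OutgoingPOF (G : SimpleGraph V) (v₀ u : V) (L : Set (Set (Sym2 V))) : Prop :=
  IsPOF G L ∧ ∀ C ∈ L, ∃ w, G.Adj u w ∧ G.dist v₀ u < G.dist v₀ w ∧ s(u, w) ∈ C

/-- A POF each of whose classes has an edge ingoing to `u`. -/
def IngoingPOF (G : SimpleGraph V) (v₀ u : V) (X : Set (Set (Sym2 V))) : Prop :=
  IsPOF G X ∧ ∀ C ∈ X, ∃ w, G.Adj w u ∧ G.dist v₀ w < G.dist v₀ u ∧ s(w, u) ∈ C

/-- `m` is a median of the triple `x, y, z`. -/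
def IsMedian (G : SimpleGraph V) (x y z m : V) : Prop :=
  m ∈ interval G x y ∧ m ∈ interval G y z ∧ m ∈ interval G z x

/-- `b` is the milestone following `a` on the way to `v`: `b` is the anti-basis of
the induced hypercube with basis `a` whose Θ-classes are the ladder set `L_{a,v}`. -/
def NextMilestone (G : SimpleGraph V) (v₀ v a b : V) : Prop :=
  ∃ S : Set V, IsInducedCube G S ∧ IsBasis G v₀ S a ∧ IsAntiBasis G v₀ S b ∧
    cubeClasses G S = ladder G a v

/-- The milestone set `Π(u,v)`: vertices obtained from `u` by iterating the
next-milestone step towards `v`. -/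
def MilestoneSet (G : SimpleGraph V) (v₀ u v : V) : Set V :=
  {p | Relation.ReflTransGen (fun a b => NextMilestone G v₀ v a b) u p}

/-- The penultimate milestone `π̄(u,v)`: the milestone of `Π(u,v)` other than `v`
closest to `v`, i.e. whose next milestone is `v` itself. -/
def IsPenultimate (G : SimpleGraph V) (v₀ u v p : V) : Prop :=
  p ∈ MilestoneSet G v₀ u v ∧ p ≠ v ∧ NextMilestone G v₀ v p v

/-- A convex set of vertices. -/
def ConvexSet (G : SimpleGraph V) (H : Set V) : Prop :=
  ∀ u ∈ H, ∀ v ∈ H, interval G u v ⊆ H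

/-- A gated set of vertices: each vertex has a gate in `H`. -/
def GatedSet (G : SimpleGraph V) (H : Set V) : Prop :=
  ∀ x : V, ∃ g ∈ H, ∀ h ∈ H, g ∈ interval G x h


section AuxMedian

open SimpleGraph

variable {V : Type*} {G : SimpleGraph V}

private lemma dist_adj (hmed : MedianGraph G) {a b : V} (h : G.Adj a b) : G.dist a b = 1 :=
  SimpleGraph.dist_eq_one_iff_adj.mpr h

private lemma no_tie (hmed : MedianGraph G) {a b : V} (h : G.Adj a b) (z : V) :
    G.dist z a ≠ G.dist z b := by
  intro he
  obtain ⟨m, ⟨h1, h2, h3⟩, -⟩ := hmed.2 a b z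
  have hab : G.dist a b = 1 := dist_adj hmed h
  have h1' : G.dist a m + G.dist m b = G.dist a b := h1
  have h2' : G.dist b m + G.dist m z = G.dist b z := h2
  have h3' : G.dist z m + G.dist m a = G.dist z a := h3
  have hma : G.dist m a = G.dist a m := SimpleGraph.dist_comm
  have hmb : G.dist m b = G.dist b m := SimpleGraph.dist_comm
  have hbz : G.dist b z = G.dist z b := SimpleGraph.dist_comm
  have hba : G.dist b a = G.dist a b := SimpleGraph.dist_comm
  have haz : G.dist a z = G.dist z a := SimpleGraph.dist_comm
  rcases (by omega : G.dist a m = 0 ∨ G.dist m b = 0) with h0 | h0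
  · have : m = a := (hmed.1.dist_eq_zero_iff.mp (SimpleGraph.dist_comm.trans h0))
    subst this
    omega
  · have : m = b := hmed.1.dist_eq_zero_iff.mp h0
    subst this
    omega

private lemma dist_succ (hmed : MedianGraph G) {a b : V} (hab : G.Adj a b) {z : V}
    (h : G.dist z a < G.dist z b) : G.dist z b = G.dist z a + 1 := by
  have h1 : G.dist z b ≤ G.dist z a + G.dist a b := hmed.1.dist_triangle
  have h2 : G.dist a b = 1 := dist_adj hmed hab
  omega

private lemma adj_cases (hmed : MedianGraph G) {a b : V} (hab : G.Adj a b) (z : V) :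
    G.dist z b = G.dist z a + 1 ∨ G.dist z a = G.dist z b + 1 := by
  rcases Ne.lt_or_gt (no_tie hmed hab z) with h | h
  · exact Or.inl (dist_succ hmed hab h)
  · exact Or.inr (dist_succ hmed hab.symm h)

private lemma exists_step (hmed : MedianGraph G) {x y : V} (hne : x ≠ y) :
    ∃ x', G.Adj x x' ∧ G.dist x' y + 1 = G.dist x y := by
  obtain ⟨wlk, hw⟩ := hmed.1.exists_walk_length_eq_dist x y
  cases wlk with
  | nil => exact absurd rfl hne
  | @cons _ c _ h p =>
    refine ⟨c, h, ?_⟩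
    have h1 : G.dist c y ≤ p.length := SimpleGraph.dist_le p
    have h2 : G.dist x y ≤ G.dist x c + G.dist c y := hmed.1.dist_triangle
    have h3 : G.dist x c = 1 := dist_adj hmed h
    simp only [SimpleGraph.Walk.length_cons] at hw
    omega

private lemma parity (hmed : MedianGraph G) (o : V) :
    ∀ (n : ℕ) (x y : V), G.dist x y = n → (G.dist x y + G.dist o x + G.dist o y) % 2 = 0 := by
  intro n
  induction n using Nat.strong_induction_on with
  | _ n ih =>
    intro x y hn
    by_cases hxy : x = y
    · subst hxy
      simp [SimpleGraph.dist_self]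
      omega
    · obtain ⟨x', hadj, hstep⟩ := exists_step hmed hxy
      have hx' := ih (G.dist x' y) (by omega) x' y rfl
      have hc := adj_cases hmed hadj o
      omega

private lemma dist_two (hmed : MedianGraph G) {p p' q : V} (h1 : G.Adj p p') (h2 : G.Adj p q)
    (hne : p' ≠ q) : G.dist p' q = 2 := by
  have hpar := parity hmed p (G.dist p' q) p' q rfl
  have ht : G.dist p' q ≤ G.dist p' p + G.dist p q := hmed.1.dist_triangle
  have e1 : G.dist p p' = 1 := dist_adj hmed h1
  have e2 : G.dist p q = 1 := dist_adj hmed h2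
  have e3 : G.dist p' p = G.dist p p' := SimpleGraph.dist_comm
  have hne0 : G.dist p' q ≠ 0 := fun h0 => hne (hmed.1.dist_eq_zero_iff.mp h0)
  omega

end AuxMedian
section AuxMedian2

open SimpleGraph

variable {V : Type*} {G : SimpleGraph V}

private lemma square_side (hmed : MedianGraph G) {u v x y : V} (hsq : IsSquare G u v x y)
    {z : V} (h : G.dist z u < G.dist z v) : G.dist z x < G.dist z y := by
  obtain ⟨huv, hxy, hux, hvy, huy, hvx⟩ := hsq
  by_contra hcon
  have hyx : G.dist z y < G.dist z x := (Ne.lt_or_gt (no_tie hmed hxy z)).resolve_left hcon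
  have hv1 : G.dist z v = G.dist z u + 1 := dist_succ hmed huv h
  have hx1 : G.dist z x = G.dist z y + 1 := dist_succ hmed hxy.symm hyx
  have hyv1 : G.dist z v ≤ G.dist z y + G.dist y v := hmed.1.dist_triangle
  have hyv : G.dist y v = 1 := dist_adj hmed hvy.symm
  rcases adj_cases hmed hux z with hc | hc
  · -- d z x = d z u + 1, d z y = d z u
    have hvx2 : G.dist v x = 2 := dist_two hmed huv hux hvx
    obtain ⟨m, -, hun⟩ := hmed.2 z v x
    have duv : G.dist u v = 1 := dist_adj hmed huv
    have dvu : G.dist v u = 1 := SimpleGraph.dist_comm.trans duv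
    have dux : G.dist u x = 1 := dist_adj hmed hux
    have dxu : G.dist x u = 1 := SimpleGraph.dist_comm.trans dux
    have duz : G.dist u z = G.dist z u := SimpleGraph.dist_comm
    have dxz : G.dist x z = G.dist z x := SimpleGraph.dist_comm
    have dyv : G.dist y v = 1 := hyv
    have dvy : G.dist v y = 1 := SimpleGraph.dist_comm.trans hyv
    have dxy : G.dist x y = 1 := dist_adj hmed hxy
    have dyx : G.dist y x = 1 := SimpleGraph.dist_comm.trans dxy
    have dyz : G.dist y z = G.dist z y := SimpleGraph.dist_comm
    have hu_med : u = m := hun u ⟨by show G.dist z u + G.dist u v = G.dist z v; omega,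
      by show G.dist v u + G.dist u x = G.dist v x; omega,
      by show G.dist x u + G.dist u z = G.dist x z; omega⟩
    have hy_med : y = m := hun y ⟨by show G.dist z y + G.dist y v = G.dist z v; omega,
      by show G.dist v y + G.dist y x = G.dist v x; omega,
      by show G.dist x y + G.dist y z = G.dist x z; omega⟩
    exact huy (hu_med.trans hy_med.symm)
  · omega

private lemma sameSide_swap (hmed : MedianGraph G) {a b : V} (hab : G.Adj a b) (z z' : V) :
    ((G.dist z a < G.dist z b ↔ G.dist z' a < G.dist z' b) ↔
     (G.dist z b < G.dist z a ↔ G.dist z' b < G.dist z' a)) := by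
  have h1 := no_tie hmed hab z
  have h2 := no_tie hmed hab z'
  omega

private lemma theta_transfer (hmed : MedianGraph G) {a b : V} (hab : G.Adj a b) {f : Sym2 V}
    (h : Relation.ReflTransGen (Theta0 G) s(a, b) f) :
    ∀ p q : V, f = s(p, q) → G.Adj p q ∧
      ∀ z z' : V, ((G.dist z a < G.dist z b ↔ G.dist z' a < G.dist z' b) ↔
        (G.dist z p < G.dist z q ↔ G.dist z' p < G.dist z' q)) := by
  induction h with
  | refl =>
    intro p q hpq
    rcases Sym2.eq_iff.mp hpq with ⟨rfl, rfl⟩ | ⟨rfl, rfl⟩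
    · exact ⟨hab, fun z z' => Iff.rfl⟩
    · exact ⟨hab.symm, fun z z' => sameSide_swap hmed hab z z'⟩
  | tail hrt h0 ih =>
    obtain ⟨u', v', x', y', hsq, hf', hf⟩ := h0
    obtain ⟨huv, hiff⟩ := ih u' v' hf'
    have hpoint : ∀ z : V, G.dist z u' < G.dist z v' ↔ G.dist z x' < G.dist z y' := by
      intro z
      constructor
      · exact fun hh => square_side hmed hsq hh
      · intro hh
        have hsq' : IsSquare G x' y' u' v' :=
          ⟨hsq.2.1, hsq.1, hsq.2.2.1.symm, hsq.2.2.2.1.symm, fun he => hsq.2.2.2.2.2 he.symm,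
            fun he => hsq.2.2.2.2.1 he.symm⟩
        exact square_side hmed hsq' hh
    have hxy' : G.Adj x' y' := hsq.2.1
    have hiff2 : ∀ z z' : V, ((G.dist z a < G.dist z b ↔ G.dist z' a < G.dist z' b) ↔
        (G.dist z x' < G.dist z y' ↔ G.dist z' x' < G.dist z' y')) := by
      intro z z'
      exact (hiff z z').trans (iff_congr (hpoint z) (hpoint z'))
    intro p q hpq
    rcases Sym2.eq_iff.mp (hf.symm.trans hpq) with ⟨rfl, rfl⟩ | ⟨rfl, rfl⟩
    · exact ⟨hxy', hiff2⟩
    · exact ⟨hxy'.symm, fun z z' => (hiff2 z z').trans (sameSide_swap hmed hxy' z z')⟩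

private lemma crossing_theta (hmed : MedianGraph G) {a b : V} (hab : G.Adj a b) :
    ∀ (K : ℕ) (p q : V), G.dist p a = K → G.Adj p q → G.dist p a < G.dist p b →
      G.dist q b < G.dist q a → Relation.ReflTransGen (Theta0 G) s(a, b) s(p, q) := by
  intro K
  induction K using Nat.strong_induction_on with
  | _ K ih =>
    intro p q hK hpq hp hq
    have hpb : G.dist p b = G.dist p a + 1 := dist_succ hmed hab hp
    have hqa : G.dist q a = G.dist q b + 1 := dist_succ hmed hab.symm hq
    have hqp : G.dist q p = 1 := SimpleGraph.dist_comm.trans (dist_adj hmed hpq)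
    have htq : G.dist q a ≤ G.dist q p + G.dist p a := hmed.1.dist_triangle
    have htp : G.dist p b ≤ G.dist p q + G.dist q b := hmed.1.dist_triangle
    have hpq1 : G.dist p q = 1 := dist_adj hmed hpq
    have hqb : G.dist q b = K := by omega
    rcases Nat.eq_zero_or_pos K with hK0 | hKpos
    · have hpa : p = a := hmed.1.dist_eq_zero_iff.mp (by omega)
      have hqb' : q = b := hmed.1.dist_eq_zero_iff.mp (by omega)
      subst hpa; subst hqb'
      exact Relation.ReflTransGen.refl
    · have hpna : p ≠ a := by
        intro he; subst he; simp [SimpleGraph.dist_self] at hK; omega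
      obtain ⟨p', hpp', hp'a⟩ := exists_step hmed hpna
      have hp'b : G.dist p' b = K := by
        have t1 : G.dist p' b ≤ G.dist p' a + G.dist a b := hmed.1.dist_triangle
        have t2 : G.dist p b ≤ G.dist p p' + G.dist p' b := hmed.1.dist_triangle
        have e1 : G.dist a b = 1 := dist_adj hmed hab
        have e2 : G.dist p p' = 1 := dist_adj hmed hpp'
        omega
      have hp'q : p' ≠ q := by intro he; subst he; omega
      have hp'q2 : G.dist p' q = 2 := dist_two hmed hpp' hpq hp'q
      obtain ⟨m, ⟨hm1, hm2, hm3⟩, -⟩ := hmed.2 p' q b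
      have e1 : G.dist p' m + G.dist m q = G.dist p' q := hm1
      have e2 : G.dist q m + G.dist m b = G.dist q b := hm2
      have e3 : G.dist b m + G.dist m p' = G.dist b p' := hm3
      have c1 : G.dist q m = G.dist m q := SimpleGraph.dist_comm
      have c2 : G.dist b m = G.dist m b := SimpleGraph.dist_comm
      have c3 : G.dist b p' = G.dist p' b := SimpleGraph.dist_comm
      have c4 : G.dist p' m = G.dist m p' := SimpleGraph.dist_comm
      have hmp' : G.dist p' m = 1 := by omega
      have hmq : G.dist m q = 1 := by omega
      have hmb : G.dist m b = K - 1 := by omega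
      have hadj1 : G.Adj p' m := SimpleGraph.dist_eq_one_iff_adj.mp hmp'
      have hadj2 : G.Adj m q := SimpleGraph.dist_eq_one_iff_adj.mp hmq
      have hma : G.dist m a = K := by
        rcases adj_cases hmed hadj1 a with hc | hc
        · have cc : G.dist a p' = G.dist p' a := SimpleGraph.dist_comm
          have cc2 : G.dist a m = G.dist m a := SimpleGraph.dist_comm
          omega
        · exfalso
          have t3 : G.dist q a ≤ G.dist q m + G.dist m a := hmed.1.dist_triangle
          have cc : G.dist a p' = G.dist p' a := SimpleGraph.dist_comm
          have cc2 : G.dist a m = G.dist m a := SimpleGraph.dist_comm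
          omega
      have hIH : Relation.ReflTransGen (Theta0 G) s(a, b) s(p', m) :=
        ih (K - 1) (by omega) p' m (by omega) hadj1 (by omega) (by omega)
      have hsq : IsSquare G p' m p q := by
        refine ⟨hadj1, hpq, hpp'.symm, hadj2, hp'q, ?_⟩
        intro he; subst he; omega
      exact hIH.tail ⟨p', m, p, q, hsq, rfl, rfl⟩

end AuxMedian2
section AuxMedian3

open SimpleGraph

variable {V : Type*} {G : SimpleGraph V}

private lemma walk_sameSide (hmed : MedianGraph G) {a b : V} (hab : G.Adj a b)
    {C : Set (Sym2 V)} (hC : C = {f | Theta G s(a, b) f}) :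
    ∀ {x y : V}, (G.deleteEdges C).Walk x y →
      (G.dist x a < G.dist x b ↔ G.dist y a < G.dist y b) := by
  intro x y wlk
  induction wlk with
  | nil => exact Iff.rfl
  | @cons x₁ x₂ y₁ h p ih =>
    have hadj : G.Adj x₁ x₂ ∧ s(x₁, x₂) ∉ C := by rwa [SimpleGraph.deleteEdges_adj] at h
    have hstep : (G.dist x₁ a < G.dist x₁ b ↔ G.dist x₂ a < G.dist x₂ b) := by
      by_contra hside
      have h1 := no_tie hmed hab x₁
      have h2 := no_tie hmed hab x₂
      apply hadj.2
      rw [hC]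
      rcases (by omega : (G.dist x₁ a < G.dist x₁ b ∧ G.dist x₂ b < G.dist x₂ a) ∨
          (G.dist x₂ a < G.dist x₂ b ∧ G.dist x₁ b < G.dist x₁ a)) with ⟨hh1, hh2⟩ | ⟨hh1, hh2⟩
      · exact ⟨G.mem_edgeSet.mpr hab, G.mem_edgeSet.mpr hadj.1,
          crossing_theta hmed hab _ x₁ x₂ rfl hadj.1 hh1 hh2⟩
      · have : s(x₂, x₁) = s(x₁, x₂) := Sym2.eq_swap
        rw [← this]
        exact ⟨G.mem_edgeSet.mpr hab, G.mem_edgeSet.mpr hadj.1.symm,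
          crossing_theta hmed hab _ x₂ x₁ rfl hadj.1.symm hh1 hh2⟩
    exact hstep.trans ih

private lemma side_reach (hmed : MedianGraph G) {a b : V} (hab : G.Adj a b)
    {C : Set (Sym2 V)} (hC : C = {f | Theta G s(a, b) f}) :
    ∀ (n : ℕ) (x : V), G.dist x a = n → G.dist x a < G.dist x b →
      (G.deleteEdges C).Reachable x a := by
  intro n
  induction n using Nat.strong_induction_on with
  | _ n ih =>
    intro x hn hx
    by_cases hxa : x = a
    · subst hxa; exact SimpleGraph.Reachable.refl _
    · obtain ⟨x', hadj, hstep⟩ := exists_step hmed hxa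
      have hxb : G.dist x b = G.dist x a + 1 := dist_succ hmed hab hx
      have htri : G.dist x b ≤ G.dist x x' + G.dist x' b := hmed.1.dist_triangle
      have hxx' : G.dist x x' = 1 := dist_adj hmed hadj
      have hx' : G.dist x' a < G.dist x' b := by omega
      have hedge : s(x, x') ∉ C := by
        intro hmem
        rw [hC] at hmem
        obtain ⟨-, -, hrtg⟩ := hmem
        have htr := (theta_transfer hmed hab hrtg x x' rfl).2 x x'
        have d1 : G.dist x x = 0 := SimpleGraph.dist_self
        have d2 : G.dist x' x' = 0 := SimpleGraph.dist_self
        have d3 : G.dist x' x = 1 := SimpleGraph.dist_comm.trans hxx'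
        omega
      have hreach : (G.deleteEdges C).Adj x x' := SimpleGraph.deleteEdges_adj.mpr ⟨hadj, hedge⟩
      exact hreach.reachable.trans (ih (G.dist x' a) (by omega) x' rfl hx')

private lemma separates_iff (hmed : MedianGraph G) {a b : V} (hab : G.Adj a b)
    {C : Set (Sym2 V)} (hC : C = {f | Theta G s(a, b) f}) (x y : V) :
    Separates G C x y ↔ ¬ (G.dist x a < G.dist x b ↔ G.dist y a < G.dist y b) := by
  constructor
  · intro hsep hside
    apply hsep
    have h1 := no_tie hmed hab x
    have h2 := no_tie hmed hab y
    rcases Ne.lt_or_gt h1 with hx | hx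
    · have hy : G.dist y a < G.dist y b := by omega
      exact (side_reach hmed hab hC _ x rfl hx).trans (side_reach hmed hab hC _ y rfl hy).symm
    · have hy : G.dist y b < G.dist y a := by omega
      have hC' : C = {f | Theta G s(b, a) f} := by rw [hC, Sym2.eq_swap (a := a) (b := b)]
      exact (side_reach hmed hab.symm hC' _ x rfl hx).trans
        (side_reach hmed hab.symm hC' _ y rfl hy).symm
  · intro hside hreach
    exact hside (walk_sameSide hmed hab hC hreach.some)

private lemma theta0_symm {e f : Sym2 V} (h : Theta0 G e f) : Theta0 G f e := by
  obtain ⟨u, v, x, y, hsq, he, hf⟩ := h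
  exact ⟨x, y, u, v, ⟨hsq.2.1, hsq.1, hsq.2.2.1.symm, hsq.2.2.2.1.symm,
    fun hh => hsq.2.2.2.2.2 hh.symm, fun hh => hsq.2.2.2.2.1 hh.symm⟩, hf, he⟩

private lemma rtg_symm {e f : Sym2 V} (h : Relation.ReflTransGen (Theta0 G) e f) :
    Relation.ReflTransGen (Theta0 G) f e := by
  induction h with
  | refl => exact Relation.ReflTransGen.refl
  | tail hrt h0 ih => exact Relation.ReflTransGen.head (theta0_symm h0) ih

private lemma class_rebase {C : Set (Sym2 V)} (hC : ThetaClass G C) {e : Sym2 V} (he : e ∈ C) :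
    e ∈ G.edgeSet ∧ C = {f | Theta G e f} := by
  obtain ⟨e₀, he₀, rfl⟩ := hC
  have he' : Theta G e₀ e := he
  refine ⟨he'.2.1, ?_⟩
  ext f
  simp only [Set.mem_setOf_eq]
  constructor
  · intro hf
    exact ⟨he'.2.1, hf.2.1, (rtg_symm he'.2.2).trans hf.2.2⟩
  · intro hf
    exact ⟨he₀, hf.2.1, he'.2.2.trans hf.2.2⟩

private lemma flat_square (hmed : MedianGraph G) {x a b y z : V} (hxa : G.Adj x a)
    (hxb : G.Adj x b) (hay : G.Adj a y) (hby : G.Adj b y) (hab : a ≠ b) (hxy : x ≠ y)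
    (h1 : G.dist z a = G.dist z x + 1) (h2 : G.dist z b = G.dist z x + 1) :
    G.dist z y = G.dist z x + 2 := by
  have hdab : G.dist a b = 2 := dist_two hmed hxa hxb hab
  have hay1 : G.dist a y = 1 := dist_adj hmed hay
  have hby1 : G.dist b y = 1 := dist_adj hmed hby
  have hxa1 : G.dist x a = 1 := dist_adj hmed hxa
  have hxb1 : G.dist x b = 1 := dist_adj hmed hxb
  rcases adj_cases hmed hay z with hc | hc
  · omega
  · exfalso
    obtain ⟨m, -, hun⟩ := hmed.2 a b z
    have cax : G.dist a x = 1 := SimpleGraph.dist_comm.trans hxa1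
    have cbx : G.dist b x = 1 := SimpleGraph.dist_comm.trans hxb1
    have cya : G.dist y a = 1 := SimpleGraph.dist_comm.trans hay1
    have cyb : G.dist y b = 1 := SimpleGraph.dist_comm.trans hby1
    have cxz : G.dist x z = G.dist z x := SimpleGraph.dist_comm
    have cyz : G.dist y z = G.dist z y := SimpleGraph.dist_comm
    have cbz : G.dist b z = G.dist z b := SimpleGraph.dist_comm
    have hx_med : x = m := hun x ⟨by show G.dist a x + G.dist x b = G.dist a b; omega,
      by show G.dist b x + G.dist x z = G.dist b z; omega,
      by show G.dist z x + G.dist x a = G.dist z a; omega⟩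
    have hy_med : y = m := hun y ⟨by show G.dist a y + G.dist y b = G.dist a b; omega,
      by show G.dist b y + G.dist y z = G.dist b z; omega,
      by show G.dist z y + G.dist y a = G.dist z a; omega⟩
    exact hxy (hx_med.trans hy_med.symm)

private lemma square_increment (hmed : MedianGraph G) {x a y b : V} (hxa : G.Adj x a)
    (hay : G.Adj a y) (hyb : G.Adj y b) (hbx : G.Adj b x) (hxy : x ≠ y) (hab : a ≠ b) (z : V) :
    (G.dist z a = G.dist z x + 1 ↔ G.dist z y = G.dist z b + 1) := by
  have c1 := adj_cases hmed hxa z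
  have c2 := adj_cases hmed hbx.symm z
  have c3 := adj_cases hmed hay z
  have c4 := adj_cases hmed hyb.symm z
  constructor
  · intro h
    rcases c2 with hb | hb
    · have := flat_square hmed hxa hbx.symm hay hyb.symm hab hxy h hb
      omega
    · omega
  · intro h
    rcases c1 with ha | ha
    · exact ha
    · exfalso
      rcases c2 with hb | hb
      · omega
      · have h2 : G.dist z y = G.dist z a + 1 := by omega
        have := flat_square hmed hxa.symm hay hbx.symm hyb hxy hab ha h2
        omega

end AuxMedian3
section AuxCube

open SimpleGraph

variable {V : Type*} {G : SimpleGraph V}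

private lemma sd_mem {α : Type*} [DecidableEq α] {X : Finset α} {i : α} (h : i ∈ X) :
    symmDiff X {i} = X.erase i := by
  ext j
  simp only [Finset.mem_symmDiff, Finset.mem_singleton, Finset.mem_erase]
  by_cases hj : j = i <;> simp [hj] <;> tauto

private lemma sd_not_mem {α : Type*} [DecidableEq α] {X : Finset α} {i : α} (h : i ∉ X) :
    symmDiff X {i} = insert i X := by
  ext j
  simp only [Finset.mem_symmDiff, Finset.mem_singleton, Finset.mem_insert]
  by_cases hj : j = i <;> simp [hj] <;> tauto

private lemma sd_shuffle {α : Type*} [DecidableEq α] (A B : Finset α) (i : α) :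
    symmDiff (symmDiff A {i}) B = symmDiff (symmDiff A B) {i} := by
  rw [symmDiff_assoc, symmDiff_comm ({i} : Finset α) B, ← symmDiff_assoc]

private lemma sd_eq_zero {α : Type*} [DecidableEq α] {A B : Finset α}
    (h : (symmDiff A B).card = 0) : A = B := by
  apply symmDiff_eq_bot.mp
  rw [Finset.bot_eq_empty]
  exact Finset.card_eq_zero.mp h

private lemma cube_dist_le {k : ℕ} {g : Finset (Fin k) → V} (hmed : MedianGraph G)
    (hadj : ∀ (A : Finset (Fin k)) (i : Fin k), G.Adj (g A) (g (symmDiff A {i}))) :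
    ∀ (n : ℕ) (A B : Finset (Fin k)), (symmDiff A B).card = n → G.dist (g A) (g B) ≤ n := by
  intro n
  induction n with
  | zero =>
    intro A B h
    rw [sd_eq_zero h]
    simp [SimpleGraph.dist_self]
  | succ n ihn =>
    intro A B h
    obtain ⟨i, hi⟩ := Finset.card_pos.mp (by omega : 0 < (symmDiff A B).card)
    have hcard : (symmDiff (symmDiff A {i}) B).card = n := by
      rw [sd_shuffle, sd_mem hi, Finset.card_erase_of_mem hi, h]
      omega
    have h1 := ihn (symmDiff A {i}) B hcard
    have h2 : G.dist (g A) (g (symmDiff A {i})) = 1 := dist_adj hmed (hadj A i)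
    have h3 : G.dist (g A) (g B) ≤ G.dist (g A) (g (symmDiff A {i})) +
        G.dist (g (symmDiff A {i})) (g B) := hmed.1.dist_triangle
    omega

private lemma cube_reach {k : ℕ} {g : Finset (Fin k) → V} {C : Set (Sym2 V)}
    (hadj : ∀ (A : Finset (Fin k)) (i : Fin k), G.Adj (g A) (g (symmDiff A {i})))
    (hnc : ∀ (A : Finset (Fin k)) (i : Fin k), s(g A, g (symmDiff A {i})) ∉ C) :
    ∀ (n : ℕ) (A B : Finset (Fin k)), (symmDiff A B).card = n →
      (G.deleteEdges C).Reachable (g A) (g B) := by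
  intro n
  induction n with
  | zero =>
    intro A B h
    rw [sd_eq_zero h]
  | succ n ihn =>
    intro A B h
    obtain ⟨i, hi⟩ := Finset.card_pos.mp (by omega : 0 < (symmDiff A B).card)
    have hcard : (symmDiff (symmDiff A {i}) B).card = n := by
      rw [sd_shuffle, sd_mem hi, Finset.card_erase_of_mem hi, h]
      omega
    have hstep : (G.deleteEdges C).Adj (g A) (g (symmDiff A {i})) :=
      SimpleGraph.deleteEdges_adj.mpr ⟨hadj A i, hnc A i⟩
    exact hstep.reachable.trans (ihn (symmDiff A {i}) B hcard)

private lemma theta_class_rep {C : Set (Sym2 V)} (hC : ThetaClass G C) :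
    ∃ a b : V, G.Adj a b ∧ C = {f | Theta G s(a, b) f} := by
  obtain ⟨e, he, rfl⟩ := hC
  induction e using Sym2.ind with
  | _ a b => exact ⟨a, b, G.mem_edgeSet.mp he, rfl⟩

end AuxCube
/-- In a median graph with basepoint `v₀`, if `u ∈ I(v₀,v)`,
`v ∈ I(v₀,w)`, and `v` and `w` are the basis and anti-basis of an induced
hypercube whose Θ-classes form a POF `L` outgoing from `v`, then `u ∈ I(v₀,w)`,
`v ∈ I(u,w)`, and `σ_{u,w} = σ_{u,v} ∪ L` with `σ_{u,v} ∩ L = ∅`. -/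
theorem signature_of_cube_extension {V : Type*} [Fintype V] (G : SimpleGraph V)
    (hmed : MedianGraph G) (v₀ u v w : V)
    (hu : u ∈ interval G v₀ v) (hv : v ∈ interval G v₀ w)
    (L : Set (Set (Sym2 V))) (hL : OutgoingPOF G v₀ v L)
    (S : Set V) (hS : IsInducedCube G S) (hbasis : IsBasis G v₀ S v)
    (hanti : IsAntiBasis G v₀ S w) (hclasses : cubeClasses G S = L) :
    u ∈ interval G v₀ w ∧ v ∈ interval G u w ∧
    signature G u w = signature G u v ∪ L ∧
    signature G u v ∩ L = ∅ := by
  classical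
  have hconn := hmed.1
  obtain ⟨k, ⟨φ⟩⟩ := hS
  let g : Finset (Fin k) → V := fun A => ((φ.symm A : ↥S) : V)
  have hgS : ∀ A, g A ∈ S := fun A => (φ.symm A).2
  have hginj : Function.Injective g := by
    intro A B h
    exact φ.symm.toEquiv.injective (Subtype.val_injective h)
  have hgadj : ∀ (A : Finset (Fin k)) (i : Fin k), G.Adj (g A) (g (symmDiff A {i})) := by
    intro A i
    have hcube : (cubeGraph k).Adj A (symmDiff A {i}) := by
      show (symmDiff A (symmDiff A {i})).card = 1
      rw [symmDiff_symmDiff_cancel_left]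
      exact Finset.card_singleton i
    exact φ.symm.map_rel_iff.mpr hcube
  have hvS := hbasis.1
  have hwS := hanti.1
  set VA : Finset (Fin k) := φ ⟨v, hvS⟩ with hVAdef
  set WA : Finset (Fin k) := φ ⟨w, hwS⟩ with hWAdef
  have hgV : g VA = v := by
    show ((φ.symm (φ ⟨v, hvS⟩) : ↥S) : V) = v
    rw [RelIso.symm_apply_apply]
  have hgW : g WA = w := by
    show ((φ.symm (φ ⟨w, hwS⟩) : ↥S) : V) = w
    rw [RelIso.symm_apply_apply]
  have hup_basis : ∀ i : Fin k, G.dist v₀ (g (symmDiff VA {i})) = G.dist v₀ v + 1 := by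
    intro i
    have hadj : G.Adj v (g (symmDiff VA {i})) := by
      have := hgadj VA i; rwa [hgV] at this
    exact dist_succ hmed hadj (hbasis.2 _ (hgS _) hadj)
  have hstepconsist : ∀ (i j : Fin k) (A : Finset (Fin k)), i ≠ j →
      ((G.dist v₀ (g (symmDiff A {i})) = G.dist v₀ (g A) + 1) ↔
       (G.dist v₀ (g (symmDiff (symmDiff A {j}) {i})) = G.dist v₀ (g (symmDiff A {j})) + 1)) := by
    intro i j A hij
    have hcommij : symmDiff (symmDiff A {i}) {j} = symmDiff (symmDiff A {j}) {i} := by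
      rw [symmDiff_assoc, symmDiff_assoc, symmDiff_comm ({i} : Finset (Fin k)) {j}]
    have h1 : G.Adj (g A) (g (symmDiff A {i})) := hgadj A i
    have h2 : G.Adj (g (symmDiff A {i})) (g (symmDiff (symmDiff A {i}) {j})) := hgadj _ j
    have h3 : G.Adj (g (symmDiff (symmDiff A {i}) {j})) (g (symmDiff A {j})) := by
      rw [hcommij]; exact (hgadj (symmDiff A {j}) i).symm
    have h4 : G.Adj (g (symmDiff A {j})) (g A) := (hgadj A j).symm
    have hne1 : g A ≠ g (symmDiff (symmDiff A {i}) {j}) := by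
      intro he
      have hAA := hginj he
      rw [symmDiff_assoc] at hAA
      have hbot : symmDiff ({i} : Finset (Fin k)) {j} = ⊥ := symmDiff_eq_left.mp hAA.symm
      have hsing : ({i} : Finset (Fin k)) = {j} := symmDiff_eq_bot.mp hbot
      exact hij (Finset.singleton_injective hsing)
    have hne2 : g (symmDiff A {i}) ≠ g (symmDiff A {j}) := by
      intro he
      have hAA := hginj he
      have hsing : ({i} : Finset (Fin k)) = {j} := by
        calc ({i} : Finset (Fin k)) = symmDiff A (symmDiff A {i}) :=
              (symmDiff_symmDiff_cancel_left A {i}).symm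
          _ = symmDiff A (symmDiff A {j}) := by rw [hAA]
          _ = {j} := symmDiff_symmDiff_cancel_left A {j}
      exact hij (Finset.singleton_injective hsing)
    have hsq := square_increment hmed h1 h2 h3 h4 hne1 hne2 v₀
    rwa [hcommij] at hsq
  have hconsist : ∀ (n : ℕ) (i : Fin k) (A B : Finset (Fin k)), (symmDiff A B).card = n →
      i ∉ A → i ∉ B →
      ((G.dist v₀ (g (symmDiff A {i})) = G.dist v₀ (g A) + 1) ↔
       (G.dist v₀ (g (symmDiff B {i})) = G.dist v₀ (g B) + 1)) := by
    intro n
    induction n with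
    | zero => intro i A B h hA hB; rw [sd_eq_zero h]
    | succ n ihn =>
      intro i A B h hiA hiB
      obtain ⟨j, hj⟩ := Finset.card_pos.mp (by omega : 0 < (symmDiff A B).card)
      have hij : i ≠ j := by
        intro he; subst he
        rcases Finset.mem_symmDiff.mp hj with ⟨h1, -⟩ | ⟨h1, -⟩
        exacts [hiA h1, hiB h1]
      have hiA' : i ∉ symmDiff A {j} := by
        intro hmem
        rcases Finset.mem_symmDiff.mp hmem with ⟨h1, -⟩ | ⟨h1, -⟩
        · exact hiA h1
        · exact hij (Finset.mem_singleton.mp h1)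
      have hcard : (symmDiff (symmDiff A {j}) B).card = n := by
        rw [sd_shuffle, sd_mem hj, Finset.card_erase_of_mem hj, h]
        omega
      exact (hstepconsist i j A hij).trans (ihn i (symmDiff A {j}) B hcard hiA' hiB)
  have hfval : ∀ (n : ℕ) (A : Finset (Fin k)), (symmDiff A VA).card = n →
      G.dist v₀ (g A) = G.dist v₀ v + n := by
    intro n
    induction n with
    | zero =>
      intro A h
      rw [sd_eq_zero h, hgV]
      omega
    | succ n ihn =>
      intro A h
      obtain ⟨i, hi⟩ := Finset.card_pos.mp (by omega : 0 < (symmDiff A VA).card)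
      have hcard : (symmDiff (symmDiff A {i}) VA).card = n := by
        rw [sd_shuffle, sd_mem hi, Finset.card_erase_of_mem hi, h]
        omega
      have hIH := ihn (symmDiff A {i}) hcard
      have hkey : G.dist v₀ (g A) = G.dist v₀ (g (symmDiff A {i})) + 1 := by
        rcases Finset.mem_symmDiff.mp hi with ⟨hiA, hiV⟩ | ⟨hiV, hiA⟩
        · have hiA' : i ∉ symmDiff A {i} := by
            intro hmem
            rcases Finset.mem_symmDiff.mp hmem with ⟨-, h2⟩ | ⟨-, h2⟩
            · exact h2 (Finset.mem_singleton_self i)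
            · exact h2 hiA
          have hcons := hconsist _ i (symmDiff A {i}) VA rfl hiA' hiV
          have hfix : symmDiff (symmDiff A {i}) {i} = A := by
            rw [symmDiff_assoc, symmDiff_self, symmDiff_bot]
          rw [hfix, hgV] at hcons
          exact hcons.mpr (hup_basis i)
        · have hiV' : i ∉ symmDiff VA {i} := by
            intro hmem
            rcases Finset.mem_symmDiff.mp hmem with ⟨-, h2⟩ | ⟨-, h2⟩
            · exact h2 (Finset.mem_singleton_self i)
            · exact h2 hiV
          have hcons := hconsist _ i A (symmDiff VA {i}) rfl hiA hiV'
          have hfix : symmDiff (symmDiff VA {i}) {i} = VA := by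
            rw [symmDiff_assoc, symmDiff_self, symmDiff_bot]
          rw [hfix, hgV] at hcons
          have hb := hup_basis i
          have hnup : ¬ (G.dist v₀ (g (symmDiff A {i})) = G.dist v₀ (g A) + 1) := by
            rw [hcons]; omega
          rcases adj_cases hmed (hgadj A i) v₀ with hc | hc
          · exact absurd hc hnup
          · exact hc
      omega
  have hanti_flip : ∀ i : Fin k, G.dist v₀ w = G.dist v₀ (g (symmDiff WA {i})) + 1 := by
    intro i
    have hadj : G.Adj w (g (symmDiff WA {i})) := by
      have := hgadj WA i; rwa [hgW] at this
    exact dist_succ hmed hadj.symm (hanti.2 _ (hgS _) hadj)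
  have hmemall : ∀ i : Fin k, i ∈ symmDiff WA VA := by
    intro i
    by_contra hni
    have h1 := hfval _ WA rfl
    have h2 := hfval _ (symmDiff WA {i}) rfl
    have hcard : (symmDiff (symmDiff WA {i}) VA).card = (symmDiff WA VA).card + 1 := by
      rw [sd_shuffle, sd_not_mem hni, Finset.card_insert_of_notMem hni]
    have h3 := hanti_flip i
    rw [hgW] at h1
    omega
  have hantipodal : symmDiff WA VA = Finset.univ := Finset.eq_univ_of_forall hmemall
  have hk : (symmDiff WA VA).card = k := by
    rw [hantipodal, Finset.card_univ, Fintype.card_fin]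
  have hvw_level : G.dist v₀ w = G.dist v₀ v + k := by
    have := hfval _ WA rfl
    rwa [hgW, hk] at this
  have hdva : ∀ A : Finset (Fin k), G.dist v (g A) = (symmDiff A VA).card := by
    intro A
    have h1 : G.dist (g VA) (g A) ≤ (symmDiff VA A).card := cube_dist_le hmed hgadj _ VA A rfl
    rw [hgV] at h1
    have hcc : (symmDiff VA A).card = (symmDiff A VA).card := by rw [symmDiff_comm]
    have h2 := hfval _ A rfl
    have h3 : G.dist v₀ (g A) ≤ G.dist v₀ v + G.dist v (g A) := hconn.dist_triangle
    omega
  have hcompl : ∀ A : Finset (Fin k), (symmDiff WA A).card + (symmDiff A VA).card = k := by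
    intro A
    have he1 : symmDiff WA A = symmDiff Finset.univ (symmDiff VA A) := by
      rw [← hantipodal, symmDiff_assoc, symmDiff_symmDiff_cancel_left]
    have he2 : symmDiff Finset.univ (symmDiff VA A) = (symmDiff VA A)ᶜ := by
      rw [← Finset.top_eq_univ, top_symmDiff, hnot_eq_compl]
    have he3 : ((symmDiff VA A)ᶜ).card = k - (symmDiff VA A).card := by
      rw [Finset.card_compl, Fintype.card_fin]
    have hle : (symmDiff VA A).card ≤ k := by
      have := Finset.card_le_univ (symmDiff VA A)
      rwa [Fintype.card_fin] at this
    have hcc : (symmDiff VA A).card = (symmDiff A VA).card := by rw [symmDiff_comm]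
    rw [he1, he2]
    omega
  have hdwa : ∀ A : Finset (Fin k), G.dist w (g A) + (symmDiff A VA).card = k := by
    intro A
    have h1 : G.dist (g WA) (g A) ≤ (symmDiff WA A).card := cube_dist_le hmed hgadj _ WA A rfl
    rw [hgW] at h1
    have h2 := hfval _ A rfl
    have h3 : G.dist v₀ w ≤ G.dist v₀ (g A) + G.dist (g A) w := hconn.dist_triangle
    have hcc : G.dist (g A) w = G.dist w (g A) := SimpleGraph.dist_comm
    have h4 := hcompl A
    omega
  have hdvw : G.dist v w = k := by
    have := hdva WA
    rwa [hgW, hk] at this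
  have hu' : G.dist v₀ u + G.dist u v = G.dist v₀ v := hu
  have hv' : G.dist v₀ v + G.dist v w = G.dist v₀ w := hv
  have hside_of : ∀ (x y : V) (hxS : x ∈ S) (hyS : y ∈ S), G.Adj x y →
      G.dist v₀ y = G.dist v₀ x + 1 →
      (G.dist v x < G.dist v y ∧ G.dist w y < G.dist w x ∧ G.dist u x < G.dist u y) := by
    intro x y hxS hyS hxy hlev
    have hgA : g (φ ⟨x, hxS⟩) = x := by
      show ((φ.symm (φ ⟨x, hxS⟩) : ↥S) : V) = x
      rw [RelIso.symm_apply_apply]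
    have hgB : g (φ ⟨y, hyS⟩) = y := by
      show ((φ.symm (φ ⟨y, hyS⟩) : ↥S) : V) = y
      rw [RelIso.symm_apply_apply]
    have hfA := hfval _ (φ ⟨x, hxS⟩) rfl
    have hfB := hfval _ (φ ⟨y, hyS⟩) rfl
    rw [hgA] at hfA
    rw [hgB] at hfB
    have hdvA := hdva (φ ⟨x, hxS⟩)
    have hdvB := hdva (φ ⟨y, hyS⟩)
    rw [hgA] at hdvA
    rw [hgB] at hdvB
    have hdwA := hdwa (φ ⟨x, hxS⟩)
    have hdwB := hdwa (φ ⟨y, hyS⟩)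
    rw [hgA] at hdwA
    rw [hgB] at hdwB
    refine ⟨by omega, by omega, ?_⟩
    by_contra hcon
    have hne := no_tie hmed hxy u
    have t1 : G.dist u x ≤ G.dist u v + G.dist v x := hconn.dist_triangle
    have t2 : G.dist v₀ y ≤ G.dist v₀ u + G.dist u y := hconn.dist_triangle
    omega
  have hLfact : ∀ C ∈ L, ∃ a b : V, G.Adj a b ∧ C = {f | Theta G s(a, b) f} ∧
      G.dist v a < G.dist v b ∧ G.dist w b < G.dist w a ∧ G.dist u a < G.dist u b := by
    intro C hCL
    have hCL' := hCL
    rw [← hclasses] at hCL'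
    obtain ⟨hCth, x, hxS, y, hyS, hxy, hmem⟩ := hCL'
    obtain ⟨hedge, hCeq⟩ := class_rebase hCth hmem
    rcases adj_cases hmed hxy v₀ with hlev | hlev
    · obtain ⟨s1, s2, s3⟩ := hside_of x y hxS hyS hxy hlev
      exact ⟨x, y, hxy, hCeq, s1, s2, s3⟩
    · obtain ⟨s1, s2, s3⟩ := hside_of y x hyS hxS hxy.symm hlev
      refine ⟨y, x, hxy.symm, ?_, s1, s2, s3⟩
      rw [hCeq, Sym2.eq_swap (a := x) (b := y)]
  have hLsep : ∀ C ∈ L, Separates G C u w ∧ Separates G C v w ∧ ¬ Separates G C u v := by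
    intro C hCL
    obtain ⟨a, b, hab, hCeq, hva, hwb, hua⟩ := hLfact C hCL
    have h1 := no_tie hmed hab u
    have h2 := no_tie hmed hab v
    have h3 := no_tie hmed hab w
    refine ⟨?_, ?_, ?_⟩
    · rw [separates_iff hmed hab hCeq u w]; omega
    · rw [separates_iff hmed hab hCeq v w]; omega
    · rw [separates_iff hmed hab hCeq u v, not_not]; omega
  have hNL : ∀ (C : Set (Sym2 V)) (a b : V), ThetaClass G C → C ∉ L → G.Adj a b →
      C = {f | Theta G s(a, b) f} → (G.dist v a < G.dist v b ↔ G.dist w a < G.dist w b) := by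
    intro C a b hCth hCL hab hCeq
    have hnc : ∀ (A : Finset (Fin k)) (i : Fin k), s(g A, g (symmDiff A {i})) ∉ C := by
      intro A i hmem
      exact hCL (by
        rw [← hclasses]
        exact ⟨hCth, g A, hgS A, g (symmDiff A {i}), hgS _, hgadj A i, hmem⟩)
    have hreach : (G.deleteEdges C).Reachable v w := by
      have := cube_reach hgadj hnc _ VA WA rfl
      rwa [hgV, hgW] at this
    by_contra hss
    exact ((separates_iff hmed hab hCeq v w).mpr hss) hreach
  have t1 : G.dist u w ≤ G.dist u v + G.dist v w := hconn.dist_triangle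
  have t2 : G.dist v₀ w ≤ G.dist v₀ u + G.dist u w := hconn.dist_triangle
  have huw : G.dist u v + G.dist v w = G.dist u w := by omega
  refine ⟨?_, huw, ?_, ?_⟩
  · show G.dist v₀ u + G.dist u w = G.dist v₀ w
    omega
  · ext C
    simp only [Set.mem_union]
    constructor
    · rintro ⟨hCth, hsep⟩
      by_cases hCL : C ∈ L
      · exact Or.inr hCL
      · refine Or.inl ⟨hCth, ?_⟩
        obtain ⟨a, b, hab, hCeq⟩ := theta_class_rep hCth
        have hvwside := hNL C a b hCth hCL hab hCeq
        rw [separates_iff hmed hab hCeq u w] at hsep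
        rw [separates_iff hmed hab hCeq u v]
        tauto
    · rintro (⟨hCth, hsep⟩ | hCL)
      · refine ⟨hCth, ?_⟩
        by_cases hCL : C ∈ L
        · exact (hLsep C hCL).1
        · obtain ⟨a, b, hab, hCeq⟩ := theta_class_rep hCth
          have hvwside := hNL C a b hCth hCL hab hCeq
          rw [separates_iff hmed hab hCeq u v] at hsep
          rw [separates_iff hmed hab hCeq u w]
          tauto
      · refine ⟨?_, (hLsep C hCL).1⟩
        have hCL' := hCL
        rw [← hclasses] at hCL'
        exact hCL'.1
  · apply Set.eq_empty_iff_forall_notMem.mpr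
    rintro C ⟨⟨hCth, hsep⟩, hCL⟩
    exact (hLsep C hCL).2.2 hsep

end MedianPaper
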